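/- Lemma (causal calibration error equals classical calibration error of pseudo-outcomes). Suppose there is a map χ : 𝒢 × 𝒵 → ℝ with χ(g; Z) square-integrable such that for every measurable θ : 𝒳 → ℝ and every g ∈ 𝒢, E[∂ℓ(θ(X), g; Z) | X] = θ(X) − E[χ(g; Z) | X] P_X-almost surely. Then for every measurable θ : 𝒳 → ℝ and every g ∈ 𝒢, Cal(θ, g) = (E[(θ(X) − E[χ(g; Z) | σ(θ∘X)])²])^{1/2}; that is, the calibration error of θ under ℓ at g equals the classical L² calibration error of θ as a predictor of the pseudo-outcome χ(g; Z). -/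

import Mathlib

/-!
Lemma (causal calibration error equals classical calibration error of pseudo-outcomes).

If there is a pseudo-outcome map `χ` with
`E[∂ℓ(θ(X), g; Z) ∣ X] = θ(X) − E[χ(g; Z) ∣ X]` a.s. for every measurable `θ` and `g ∈ 𝒢`,
then `Cal(θ, g)` equals the classical `L²` calibration error of `θ` as a predictor of the
pseudo-outcome `χ(g; Z)`.
-/

open MeasureTheory

noncomputable section

namespace Stmt3

variable {Ω 𝒳 : Type*} [MeasurableSpace Ω] [MeasurableSpace 𝒳]

/-- `L²` calibration error of `θ` with respect to the loss derivative `dl` at nuisance `g`. -/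
def Cal {N : Type*} (μ : Measure Ω) (X : Ω → 𝒳) (dl : ℝ → N → Ω → ℝ)
    (θ : 𝒳 → ℝ) (g : N) : ℝ :=
  Real.sqrt (∫ ω, ((μ[(fun ω' => dl (θ (X ω')) g ω') |
    MeasurableSpace.comap (fun ω' => θ (X ω')) inferInstance]) ω) ^ 2 ∂μ)

theorem causal_cal_eq_classical_cal_of_pseudo_outcomes
    {N : Type*}
    (μ : Measure Ω) [IsProbabilityMeasure μ]
    (X : Ω → 𝒳) (hX : Measurable X)
    (𝒢 : Set N)
    (dl : ℝ → N → Ω → ℝ)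
    (hdl2 : ∀ (θ : 𝒳 → ℝ), Measurable θ → ∀ g ∈ 𝒢,
      MemLp (fun ω => dl (θ (X ω)) g ω) 2 μ)
    -- the pseudo-outcome map, square-integrable
    (χ : N → Ω → ℝ)
    (hχ2 : ∀ g ∈ 𝒢, MemLp (χ g) 2 μ)
    -- linear score condition
    (hscore : ∀ (θ : 𝒳 → ℝ), Measurable θ → ∀ g ∈ 𝒢,
      μ[(fun ω => dl (θ (X ω)) g ω) | MeasurableSpace.comap X inferInstance]
        =ᵐ[μ] fun ω => θ (X ω) - (μ[χ g | MeasurableSpace.comap X inferInstance]) ω)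
    -- conclusion, for every measurable estimator `θ` and every `g ∈ 𝒢`
    (θ : 𝒳 → ℝ) (hθ : Measurable θ) (g : N) (hg : g ∈ 𝒢) :
    Cal μ X dl θ g =
      Real.sqrt (∫ ω, (θ (X ω) -
        (μ[χ g | MeasurableSpace.comap (fun ω' => θ (X ω')) inferInstance]) ω) ^ 2 ∂μ) := by
  set m₁ : MeasurableSpace Ω :=
    MeasurableSpace.comap (fun ω' => θ (X ω')) inferInstance with hm₁def
  set m₂ : MeasurableSpace Ω := MeasurableSpace.comap X inferInstance with hm₂def
  have hm₂le : m₂ ≤ _ := hX.comap_le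
  have hm₁₂ : m₁ ≤ m₂ := by
    rw [hm₁def, hm₂def]
    have : (fun ω' => θ (X ω')) = θ ∘ X := rfl
    rw [this, ← MeasurableSpace.comap_comp]
    exact MeasurableSpace.comap_mono hθ.comap_le
  have hm₁le := hm₁₂.trans hm₂le
  have hdl_int : Integrable (fun ω => dl (θ (X ω)) g ω) μ :=
    (hdl2 θ hθ g hg).integrable (by norm_num)
  have hχ_int : Integrable (χ g) μ := (hχ2 g hg).integrable (by norm_num)
  -- θ ∘ X is integrable
  have hθX_int : Integrable (fun ω => θ (X ω)) μ := by
    have : (fun ω => θ (X ω)) =ᵐ[μ]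
        fun ω => (μ[(fun ω' => dl (θ (X ω')) g ω') | m₂]) ω + (μ[χ g | m₂]) ω := by
      filter_upwards [hscore θ hθ g hg] with ω hω
      rw [hω]; ring
    exact (integrable_condExp.add integrable_condExp).congr this.symm
  -- tower property
  have htower :
      μ[(fun ω' => dl (θ (X ω')) g ω') | m₁]
        =ᵐ[μ] μ[(μ[(fun ω' => dl (θ (X ω')) g ω') | m₂]) | m₁] :=
    (condExp_condExp_of_le hm₁₂ hm₂le).symm
  have hcong :
      μ[(μ[(fun ω' => dl (θ (X ω')) g ω') | m₂]) | m₁]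
        =ᵐ[μ] μ[(fun ω => θ (X ω) - (μ[χ g | m₂]) ω) | m₁] :=
    condExp_congr_ae (hscore θ hθ g hg)
  have hsub :
      μ[(fun ω => θ (X ω) - (μ[χ g | m₂]) ω) | m₁]
        =ᵐ[μ] fun ω => (μ[(fun ω => θ (X ω)) | m₁]) ω - (μ[(μ[χ g | m₂]) | m₁]) ω :=
    condExp_sub hθX_int integrable_condExp m₁
  have hθX_meas : StronglyMeasurable[m₁] (fun ω => θ (X ω)) :=
    (Measurable.of_comap_le le_rfl).stronglyMeasurable
  have hθX_ce : μ[(fun ω => θ (X ω)) | m₁] =ᵐ[μ] fun ω => θ (X ω) := by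
    exact Filter.EventuallyEq.of_eq (condExp_of_stronglyMeasurable hm₁le hθX_meas hθX_int)
  have hχtower : μ[(μ[χ g | m₂]) | m₁] =ᵐ[μ] μ[χ g | m₁] :=
    condExp_condExp_of_le hm₁₂ hm₂le
  have hmain :
      μ[(fun ω' => dl (θ (X ω')) g ω') | m₁]
        =ᵐ[μ] fun ω => θ (X ω) - (μ[χ g | m₁]) ω := by
    filter_upwards [htower, hcong, hsub, hθX_ce, hχtower] with ω h1 h2 h3 h4 h5
    rw [h1, h2, h3, h4, h5]
  unfold Cal
  rw [← hm₁def]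
  congr 1
  refine integral_congr_ae ?_
  filter_upwards [hmain] with ω h
  rw [h]

end Stmt3
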